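/- Let D ⊂ ℝ^{n+d} be a convex body, S_D = D ∩ (ℤⁿ × ℝ^d), and K_D = proj_{ℝⁿ}(D). Suppose there exist z_D ∈ ℝⁿ and k > 1/2 with z_D + k·B∞ⁿ ⊆ K_D, where B∞ⁿ is the unit ℓ∞ ball. Then (1 - 1/(2k))^{n+d} · vol_{n+d}(D) ≤ H_d(S_D) ≤ (1 + 1/(2k))^{n+d} · vol_{n+d}(D). -/

import Mathlib

open MeasureTheory Set Metric
open scoped ENNReal Pointwise

/-- The mixed-integer volume `H_d(A) = Σ_{z ∈ ℤⁿ} vol_d(A_z)`. -/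
noncomputable def mixVol (n d : ℕ) (A : Set ((Fin n → ℝ) × (Fin d → ℝ))) : ℝ≥0∞ :=
  ∑' z : Fin n → ℤ, volume {x : Fin d → ℝ | ((fun i => (z i : ℝ)), x) ∈ A}

/-- The mixed-integer lattice `ℤⁿ × ℝ^d` as a subset of `ℝⁿ × ℝ^d`. -/
def mixLattice (n d : ℕ) : Set ((Fin n → ℝ) × (Fin d → ℝ)) :=
  {p | ∃ z : Fin n → ℤ, p.1 = fun i => (z i : ℝ)}

/-- Contraction lemma: slices of a convex set. -/
lemma slice_contract {n d : ℕ} {D : Set ((Fin n → ℝ) × (Fin d → ℝ))} (hconv : Convex ℝ D)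
    {σ : ℝ} (hσ0 : 0 ≤ σ) (hσ1 : σ ≤ 1) (c₁ : Fin n → ℝ) {w : Fin n → ℝ}
    (hw : w ∈ Prod.fst '' D) :
    ENNReal.ofReal ((1 - σ) ^ d) * volume {x : Fin d → ℝ | (c₁, x) ∈ D}
      ≤ volume {x : Fin d → ℝ | ((1 - σ) • c₁ + σ • w, x) ∈ D} := by
  obtain ⟨p, hp, hpw⟩ := hw
  set s : Set (Fin d → ℝ) := {x | (c₁, x) ∈ D} with hs
  have himg : (fun x : Fin d → ℝ => σ • p.2 + (1 - σ) • x) '' s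
      ⊆ {x : Fin d → ℝ | ((1 - σ) • c₁ + σ • w, x) ∈ D} := by
    rintro _ ⟨x, hx, rfl⟩
    have h := hconv (a := 1 - σ) (b := σ) hx hp (by linarith) hσ0 (by ring)
    have heq : (1 - σ) • ((c₁, x) : (Fin n → ℝ) × (Fin d → ℝ)) + σ • p
        = ((1 - σ) • c₁ + σ • w, σ • p.2 + (1 - σ) • x) := by
      subst hpw
      refine Prod.ext rfl ?_
      exact add_comm _ _
    rw [heq] at h
    exact h
  have himage : (fun x : Fin d → ℝ => σ • p.2 + (1 - σ) • x) '' s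
      = σ • p.2 +ᵥ ((1 - σ) • s) := by
    rw [← Set.image_vadd, ← Set.image_smul, Set.image_image]
    rfl
  have hvol : volume ((fun x : Fin d → ℝ => σ • p.2 + (1 - σ) • x) '' s)
      = ENNReal.ofReal ((1 - σ) ^ d) * volume s := by
    rw [himage, measure_vadd, Measure.addHaar_smul]
    congr 2
    have hfr : Module.finrank ℝ (Fin d → ℝ) = d := by simp
    rw [hfr, abs_of_nonneg (pow_nonneg (by linarith) d)]
  calc ENNReal.ofReal ((1 - σ) ^ d) * volume s
      = volume ((fun x : Fin d → ℝ => σ • p.2 + (1 - σ) • x) '' s) := hvol.symm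
    _ ≤ _ := measure_mono himg

/-- Unit box around an integer lattice point. -/
def intBox (n : ℕ) (z : Fin n → ℤ) : Set (Fin n → ℝ) :=
  Set.pi Set.univ fun i => Set.Ico ((z i : ℝ) - 1/2) ((z i : ℝ) + 1/2)

lemma intBox_meas {n : ℕ} (z : Fin n → ℤ) : MeasurableSet (intBox n z) :=
  MeasurableSet.pi countable_univ fun _ _ => measurableSet_Ico

lemma mem_intBox_iff {n : ℕ} {z : Fin n → ℤ} {u : Fin n → ℝ} :
    u ∈ intBox n z ↔ ∀ i, z i = ⌊u i + 1/2⌋ := by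
  simp only [intBox, Set.mem_pi, Set.mem_univ, forall_true_left, Set.mem_Ico]
  refine forall_congr' fun i => ?_
  rw [eq_comm, Int.floor_eq_iff]
  constructor
  · rintro ⟨h1, h2⟩
    exact ⟨by linarith, by linarith⟩
  · rintro ⟨h1, h2⟩
    exact ⟨by linarith, by linarith⟩

lemma intBox_cover (n : ℕ) : (⋃ z : Fin n → ℤ, intBox n z) = Set.univ := by
  refine Set.eq_univ_iff_forall.2 fun u => Set.mem_iUnion.2 ?_
  exact ⟨fun i => ⌊u i + 1/2⌋, mem_intBox_iff.2 fun i => rfl⟩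

lemma intBox_disj (n : ℕ) : Pairwise (Function.onFun Disjoint (intBox n)) := by
  intro z z' hzz'
  rw [Function.onFun, Set.disjoint_left]
  intro u hu hu'
  exact hzz' (funext fun i => (mem_intBox_iff.1 hu i).trans (mem_intBox_iff.1 hu' i).symm)

lemma intBox_vol {n : ℕ} (z : Fin n → ℤ) : volume (intBox n z) = 1 := by
  rw [intBox, Real.volume_pi_Ico]
  have h : ∀ i ∈ Finset.univ (α := Fin n),
      ENNReal.ofReal ((z i : ℝ) + 1/2 - ((z i : ℝ) - 1/2)) = 1 := by
    intro i _
    norm_num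
  rw [Finset.prod_congr rfl h, Finset.prod_const_one]

lemma lintegral_intBox {n : ℕ} (G : (Fin n → ℝ) → ℝ≥0∞) :
    ∫⁻ u, G u = ∑' z : Fin n → ℤ, ∫⁻ u in intBox n z, G u := by
  rw [← setLIntegral_univ, ← intBox_cover n, lintegral_iUnion intBox_meas (intBox_disj n)]

lemma lintegral_scale_shift {n : ℕ} {F : (Fin n → ℝ) → ℝ≥0∞} (hF : Measurable F)
    {c : ℝ} (hc : c ≠ 0) (b : Fin n → ℝ) :
    ∫⁻ u, F (c • u + b) = ENNReal.ofReal |(c ^ n)⁻¹| * ∫⁻ s, F s := by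
  have h1 : ∫⁻ t, F (t + b) ∂(Measure.map (fun u : Fin n → ℝ => c • u) volume)
      = ∫⁻ u, F (c • u + b) := by
    rw [lintegral_map (by fun_prop) (by fun_prop)]
  rw [← h1, Measure.map_addHaar_smul volume hc, lintegral_smul_measure,
    lintegral_add_right_eq_self (fun t => F t) b]
  congr 3
  simp

theorem comparison_inequality (n d : ℕ) (D : Set ((Fin n → ℝ) × (Fin d → ℝ)))
    (hconv : Convex ℝ D) (hcomp : IsCompact D) (hint : (interior D).Nonempty)
    (z_D : Fin n → ℝ) (k : ℝ) (hk : 1 / 2 < k)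
    (hbox : closedBall z_D k ⊆ Prod.fst '' D) :
    ENNReal.ofReal ((1 - 1 / (2 * k)) ^ (n + d)) * volume D ≤
      mixVol n d (D ∩ mixLattice n d) ∧
    mixVol n d (D ∩ mixLattice n d) ≤
      ENNReal.ofReal ((1 + 1 / (2 * k)) ^ (n + d)) * volume D := by
  have hD : MeasurableSet D := hcomp.measurableSet
  have hk0 : (0:ℝ) < k := by linarith
  set F : (Fin n → ℝ) → ℝ≥0∞ := fun u => volume {x : Fin d → ℝ | (u, x) ∈ D} with hF_def
  have hF : Measurable F := measurable_measure_prodMk_left hD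
  set lam : ℝ := 1 / (2 * k) with hlam_def
  have hlam0 : 0 < lam := by positivity
  have hlam1 : lam < 1 := by
    rw [hlam_def, div_lt_one (by linarith)]
    linarith
  have hlaminv : lam⁻¹ = 2 * k := by rw [hlam_def, one_div, inv_inv]
  -- mixVol rewrite
  have hmix : mixVol n d (D ∩ mixLattice n d) = ∑' z : Fin n → ℤ, F (fun i => (z i : ℝ)) := by
    unfold mixVol
    refine tsum_congr fun z => ?_
    congr 1
    ext x
    simp only [Set.mem_setOf_eq, Set.mem_inter_iff, mixLattice]
    exact and_iff_left ⟨z, rfl⟩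
  -- Fubini
  have hvolD : volume D = ∫⁻ u, F u := by
    rw [MeasureTheory.Measure.volume_eq_prod, Measure.prod_apply hD]
    rfl
  -- membership of perturbed centers
  have hvmem : ∀ v : Fin n → ℝ, (∀ i, |v i| ≤ k) → z_D + v ∈ Prod.fst '' D := by
    intro v hv
    apply hbox
    rw [mem_closedBall, dist_pi_le_iff hk0.le]
    intro i
    simpa [Real.dist_eq] using hv i
  have habs : ∀ (z : Fin n → ℤ) (u : Fin n → ℝ), u ∈ intBox n z →
      ∀ i, |(z i : ℝ) - u i| ≤ 1/2 := by
    intro z u hu i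
    have h := hu i (Set.mem_univ i)
    rw [Set.mem_Ico] at h
    rw [abs_le]
    constructor <;> linarith [h.1, h.2]
  -- LOWER BOUND
  have lower : ENNReal.ofReal ((1 - lam) ^ (n + d)) * volume D ≤
      mixVol n d (D ∩ mixLattice n d) := by
    have h1lam : (0:ℝ) < 1 - lam := by linarith
    set c : ℝ := (1 - lam)⁻¹ with hc_def
    have hc0 : (0:ℝ) < c := by positivity
    set b : Fin n → ℝ := c • (-(lam • z_D)) with hb_def
    have hlow : ∀ (z : Fin n → ℤ), ∀ u ∈ intBox n z,
        ENNReal.ofReal ((1 - lam) ^ d) * F (c • u + b) ≤ F (fun i => (z i : ℝ)) := by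
      intro z u hu
      set zc : Fin n → ℝ := fun i => (z i : ℝ) with hzc
      set v : Fin n → ℝ := lam⁻¹ • (zc - u) with hv_def
      have hvk : ∀ i, |v i| ≤ k := by
        intro i
        have : |v i| = lam⁻¹ * |zc i - u i| := by
          rw [hv_def]
          simp [abs_mul, abs_of_pos (inv_pos.2 hlam0)]
        rw [this, hlaminv]
        have := habs z u hu i
        nlinarith
      have key : zc = (1 - lam) • (c • u + b) + lam • (z_D + v) := by
        funext i
        simp only [hb_def, hv_def, hc_def, Pi.add_apply, Pi.smul_apply, Pi.neg_apply,
          Pi.sub_apply, smul_eq_mul]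
        field_simp
        ring
      have h2 := slice_contract hconv hlam0.le hlam1.le (c • u + b) (hvmem v hvk)
      rw [← key] at h2
      exact h2
    rw [hmix, hvolD]
    have hFg : Measurable fun u : Fin n → ℝ => F (c • u + b) := by
      apply hF.comp
      fun_prop
    have hcov : ∫⁻ u, F (c • u + b) = ENNReal.ofReal ((1 - lam) ^ n) * ∫⁻ s, F s := by
      rw [lintegral_scale_shift hF hc0.ne' b]
      congr 2
      rw [hc_def, ← inv_pow, inv_inv, abs_of_nonneg (pow_nonneg h1lam.le n)]
    calc ENNReal.ofReal ((1 - lam) ^ (n + d)) * ∫⁻ u, F u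
        = ENNReal.ofReal ((1 - lam) ^ d) * (ENNReal.ofReal ((1 - lam) ^ n) * ∫⁻ u, F u) := by
          rw [← mul_assoc, ← ENNReal.ofReal_mul (pow_nonneg h1lam.le d), ← pow_add]
          ring_nf
      _ = ENNReal.ofReal ((1 - lam) ^ d) * ∫⁻ u, F (c • u + b) := by rw [hcov]
      _ = ∑' z : Fin n → ℤ, ∫⁻ u in intBox n z,
            ENNReal.ofReal ((1 - lam) ^ d) * F (c • u + b) := by
          rw [← lintegral_const_mul _ hFg,
            lintegral_intBox (fun u => ENNReal.ofReal ((1 - lam) ^ d) * F (c • u + b))]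
      _ ≤ ∑' z : Fin n → ℤ, F (fun i => (z i : ℝ)) := by
          refine ENNReal.tsum_le_tsum fun z => ?_
          calc ∫⁻ u in intBox n z, ENNReal.ofReal ((1 - lam) ^ d) * F (c • u + b)
              ≤ ∫⁻ _ in intBox n z, F (fun i => (z i : ℝ)) :=
                setLIntegral_mono' (intBox_meas z) (hlow z)
            _ = F (fun i => (z i : ℝ)) := by
                rw [setLIntegral_const, intBox_vol, mul_one]
  -- UPPER BOUND
  have upper : mixVol n d (D ∩ mixLattice n d) ≤
      ENNReal.ofReal ((1 + lam) ^ (n + d)) * volume D := by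
    set mu : ℝ := 1 + lam with hmu_def
    have hmu0 : (0:ℝ) < mu := by positivity
    have hmuinv0 : (0:ℝ) < mu⁻¹ := by positivity
    set σ : ℝ := lam / mu with hσ_def
    have hσ0 : 0 ≤ σ := by positivity
    have hσ1 : σ ≤ 1 := by
      rw [hσ_def, div_le_one hmu0]
      linarith
    have h1σ : 1 - σ = mu⁻¹ := by
      rw [hσ_def, hmu_def]
      field_simp
      ring
    set b : Fin n → ℝ := mu⁻¹ • (lam • z_D) with hb_def
    have hup : ∀ (z : Fin n → ℤ), ∀ u ∈ intBox n z,
        F (fun i => (z i : ℝ)) ≤ ENNReal.ofReal (mu ^ d) * F (mu⁻¹ • u + b) := by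
      intro z u hu
      set zc : Fin n → ℝ := fun i => (z i : ℝ) with hzc
      set v : Fin n → ℝ := lam⁻¹ • (u - zc) with hv_def
      have hvk : ∀ i, |v i| ≤ k := by
        intro i
        have : |v i| = lam⁻¹ * |u i - zc i| := by
          rw [hv_def]
          simp [abs_mul, abs_of_pos (inv_pos.2 hlam0)]
        rw [this, hlaminv]
        have := habs z u hu i
        rw [abs_sub_comm] at this
        nlinarith
      have key : mu⁻¹ • u + b = (1 - σ) • zc + σ • (z_D + v) := by
        funext i
        simp only [hb_def, hv_def, hσ_def, Pi.add_apply, Pi.smul_apply, Pi.sub_apply,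
          smul_eq_mul]
        field_simp
        ring
      have h2 := slice_contract hconv hσ0 hσ1 zc (hvmem v hvk)
      rw [← key, h1σ] at h2
      have h3 : F zc = ENNReal.ofReal (mu ^ d) * (ENNReal.ofReal (mu⁻¹ ^ d) * F zc) := by
        rw [← mul_assoc, ← ENNReal.ofReal_mul (pow_nonneg hmu0.le d), ← mul_pow,
          mul_inv_cancel₀ hmu0.ne', one_pow, ENNReal.ofReal_one, one_mul]
      calc F zc = ENNReal.ofReal (mu ^ d) * (ENNReal.ofReal (mu⁻¹ ^ d) * F zc) := h3
        _ ≤ ENNReal.ofReal (mu ^ d) * F (mu⁻¹ • u + b) := mul_le_mul_right h2 _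
    rw [hmix, hvolD]
    have hFg : Measurable fun u : Fin n → ℝ => F (mu⁻¹ • u + b) := by
      apply hF.comp
      fun_prop
    have hcov : ∫⁻ u, F (mu⁻¹ • u + b) = ENNReal.ofReal (mu ^ n) * ∫⁻ s, F s := by
      rw [lintegral_scale_shift hF (by positivity : mu⁻¹ ≠ 0) b]
      congr 2
      rw [← inv_pow, inv_inv, abs_of_nonneg (pow_nonneg hmu0.le n)]
    calc ∑' z : Fin n → ℤ, F (fun i => (z i : ℝ))
        ≤ ∑' z : Fin n → ℤ, ∫⁻ u in intBox n z,
            ENNReal.ofReal (mu ^ d) * F (mu⁻¹ • u + b) := by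
          refine ENNReal.tsum_le_tsum fun z => ?_
          calc F (fun i => (z i : ℝ))
              = ∫⁻ _ in intBox n z, F (fun i => (z i : ℝ)) := by
                rw [setLIntegral_const, intBox_vol, mul_one]
            _ ≤ _ := setLIntegral_mono' (intBox_meas z) (hup z)
      _ = ENNReal.ofReal (mu ^ d) * ∫⁻ u, F (mu⁻¹ • u + b) := by
          rw [← lintegral_const_mul _ hFg,
            lintegral_intBox (fun u => ENNReal.ofReal (mu ^ d) * F (mu⁻¹ • u + b))]
      _ = ENNReal.ofReal ((1 + lam) ^ (n + d)) * ∫⁻ u, F u := by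
          rw [hcov, ← mul_assoc, ← ENNReal.ofReal_mul (pow_nonneg hmu0.le d), ← pow_add]
          rw [hmu_def]
          ring_nf
  exact ⟨lower, upper⟩
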